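/- Fix k, r, ℓ ≥ 1 and let P be the finite simple graph on vertex set {0,…,r} × {1,…,ℓ} in which (i,j) and (i′,j′) are adjacent if and only if j = j′ and |i − i′| = 1 (so P is the disjoint union of ℓ paths, each of length r; call (0,j) the sources and (r,j) the targets). Then for every k-flip G′ of P, there are at least ℓ − r·k indices j ∈ {1,…,ℓ} such that the target (r,j) is joined to some source (0,j′) by a path of length r in G′. -/

import Mathlib

open Fin.NatCast


/-- A `k`-flip of a graph `G`: there exist a coloring `c : V → Fin k` and a symmetric
relation `F` on `Fin k` such that distinct vertices `u, v` are adjacent in `G'` iff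
exactly one of `G.Adj u v` and `F (c u) (c v)` holds. -/
def IsKFlip {V : Type*} (k : ℕ) (G G' : SimpleGraph V) : Prop :=
  ∃ (c : V → Fin k) (F : Fin k → Fin k → Prop), Symmetric F ∧
    ∀ u v : V, u ≠ v → (G'.Adj u v ↔ Xor' (G.Adj u v) (F (c u) (c v)))

/-- The disjoint union of `ℓ` paths, each of length `r`, on the vertex set
`Fin (r+1) × Fin ℓ`: `(i, j)` and `(i', j')` are adjacent iff `j = j'` and
`|i - i'| = 1`.  The sources are the vertices `(0, j)`, the targets the vertices
`(r, j)`. -/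
def pathsGraph (r ℓ : ℕ) : SimpleGraph (Fin (r + 1) × Fin ℓ) :=
  SimpleGraph.fromRel fun p q => p.2 = q.2 ∧ (p.1 : ℕ) + 1 = (q.1 : ℕ)

-- The set of "doomed" columns at level `i`: a column is doomed at level `i+1`
-- if every `G'`-neighbor of `(i+1, z)` at level `i` is in a doomed column.
open Classical in
noncomputable def doomedSet {r ℓ : ℕ} (G' : SimpleGraph (Fin (r + 1) × Fin ℓ)) :
    ℕ → Finset (Fin ℓ)
  | 0 => ∅
  | (i + 1) => Finset.univ.filter fun z =>
      ∀ x : Fin ℓ, G'.Adj (((i + 1 : ℕ) : Fin (r + 1)), z) (((i : ℕ) : Fin (r + 1)), x) →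
        x ∈ doomedSet G' i

lemma mem_doomedSet_succ {r ℓ : ℕ} (G' : SimpleGraph (Fin (r + 1) × Fin ℓ)) (i : ℕ) (z : Fin ℓ) :
    z ∈ doomedSet G' (i + 1) ↔
      ∀ x : Fin ℓ, G'.Adj (((i + 1 : ℕ) : Fin (r + 1)), z) (((i : ℕ) : Fin (r + 1)), x) →
        x ∈ doomedSet G' i := by
  simp [doomedSet]

lemma adj_char {k r ℓ : ℕ} {G' : SimpleGraph (Fin (r + 1) × Fin ℓ)}
    {c : Fin (r + 1) × Fin ℓ → Fin k} {F : Fin k → Fin k → Prop}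
    (hadj : ∀ u v, u ≠ v → (G'.Adj u v ↔ Xor' ((pathsGraph r ℓ).Adj u v) (F (c u) (c v))))
    {i : ℕ} (hi : i + 1 ≤ r) (z x : Fin ℓ) :
    G'.Adj (((i + 1 : ℕ) : Fin (r + 1)), z) (((i : ℕ) : Fin (r + 1)), x) ↔
      (if z = x then ¬ F (c (((i + 1 : ℕ) : Fin (r + 1)), z)) (c (((i : ℕ) : Fin (r + 1)), x))
        else F (c (((i + 1 : ℕ) : Fin (r + 1)), z)) (c (((i : ℕ) : Fin (r + 1)), x))) := by
  have hv1 : ((i + 1 : ℕ) : Fin (r + 1)).val = i + 1 := Fin.val_cast_of_lt (by omega)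
  have hv0 : ((i : ℕ) : Fin (r + 1)).val = i := Fin.val_cast_of_lt (by omega)
  have hne : (((i + 1 : ℕ) : Fin (r + 1)), z) ≠ (((i : ℕ) : Fin (r + 1)), x) := by
    intro h
    have := congrArg (fun p => (p.1 : ℕ)) h
    simp only [hv1, hv0] at this
    omega
  rw [hadj _ _ hne]
  have hP : (pathsGraph r ℓ).Adj (((i + 1 : ℕ) : Fin (r + 1)), z) (((i : ℕ) : Fin (r + 1)), x)
      ↔ z = x := by
    rw [pathsGraph, SimpleGraph.fromRel_adj]
    constructor
    · rintro ⟨-, ⟨h1, h2⟩ | ⟨h1, h2⟩⟩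
      · simp only [hv1, hv0] at h2; omega
      · exact h1.symm
    · intro h
      exact ⟨hne, Or.inr ⟨h.symm, by simp only [hv0, hv1]⟩⟩
  rw [hP]
  by_cases h : z = x <;> simp [h, Xor']

lemma card_doomedSet_succ {k r ℓ : ℕ} {G' : SimpleGraph (Fin (r + 1) × Fin ℓ)}
    {c : Fin (r + 1) × Fin ℓ → Fin k} {F : Fin k → Fin k → Prop}
    (hadj : ∀ u v, u ≠ v → (G'.Adj u v ↔ Xor' ((pathsGraph r ℓ).Adj u v) (F (c u) (c v))))
    {i : ℕ} (hi : i + 1 ≤ r) :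
    (doomedSet G' (i + 1)).card ≤ (doomedSet G' i).card + k := by
  classical
  set D := doomedSet G' i with hD
  set D1 := doomedSet G' (i + 1) with hD1
  have key : ∀ z ∈ D1, z ∉ D →
      F (c (((i + 1 : ℕ) : Fin (r + 1)), z)) (c (((i : ℕ) : Fin (r + 1)), z)) := by
    intro z hz hzD
    by_contra hFz
    have hadj' : G'.Adj (((i + 1 : ℕ) : Fin (r + 1)), z) (((i : ℕ) : Fin (r + 1)), z) := by
      rw [adj_char hadj hi, if_pos rfl]; exact hFz
    exact hzD ((mem_doomedSet_succ G' i z).1 hz z hadj')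
  have hinj : Set.InjOn (fun z => c (((i + 1 : ℕ) : Fin (r + 1)), z)) (D1 \ D : Finset (Fin ℓ)) := by
    intro z1 hz1 z2 hz2 hcc
    simp only [Finset.coe_sdiff, Set.mem_diff, Finset.mem_coe] at hz1 hz2
    by_contra hne
    have hF2 := key z2 hz2.1 hz2.2
    have hadj' : G'.Adj (((i + 1 : ℕ) : Fin (r + 1)), z1) (((i : ℕ) : Fin (r + 1)), z2) := by
      rw [adj_char hadj hi]
      simp only [if_neg hne]
      rw [show c (((i + 1 : ℕ) : Fin (r + 1)), z1) = c (((i + 1 : ℕ) : Fin (r + 1)), z2) from hcc]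
      exact hF2
    exact hz2.2 ((mem_doomedSet_succ G' i z1).1 hz1.1 z2 hadj')
  have hsub : D1 ⊆ D ∪ (D1 \ D) := by
    intro z hz
    by_cases h : z ∈ D
    · exact Finset.mem_union_left _ h
    · exact Finset.mem_union_right _ (Finset.mem_sdiff.2 ⟨hz, h⟩)
  have h2 : (D1 \ D).card ≤ k := by
    have := Finset.card_le_card_of_injOn (fun z => c (((i + 1 : ℕ) : Fin (r + 1)), z))
      (fun a _ => Finset.mem_univ _) hinj
    simpa using this
  calc D1.card ≤ (D ∪ (D1 \ D)).card := Finset.card_le_card hsub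
    _ ≤ D.card + (D1 \ D).card := Finset.card_union_le _ _
    _ ≤ D.card + k := by omega

lemma escape {r ℓ : ℕ} (G' : SimpleGraph (Fin (r + 1) × Fin ℓ)) :
    ∀ i : ℕ, i ≤ r → ∀ z : Fin ℓ, z ∉ doomedSet G' i →
      ∃ (j' : Fin ℓ) (p : G'.Walk (((i : ℕ) : Fin (r + 1)), z) (0, j')),
        p.IsPath ∧ p.length = i ∧ ∀ v ∈ p.support, (v.1 : ℕ) ≤ i := by
  intro i
  induction i with
  | zero =>
    intro _ z _
    refine ⟨z, ?_⟩
    have e : ((0 : ℕ) : Fin (r + 1)) = 0 := Nat.cast_zero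
    rw [e]
    exact ⟨SimpleGraph.Walk.nil, SimpleGraph.Walk.IsPath.nil, rfl, by simp⟩
  | succ i ih =>
    intro hir z hz
    rw [mem_doomedSet_succ] at hz
    push_neg at hz
    obtain ⟨x, hxadj, hxD⟩ := hz
    obtain ⟨j', p, hp, hlen, hsupp⟩ := ih (by omega) x hxD
    have hv1 : ((i + 1 : ℕ) : Fin (r + 1)).val = i + 1 := Fin.val_cast_of_lt (by omega)
    refine ⟨j', SimpleGraph.Walk.cons hxadj p, hp.cons ?_, by simp [hlen], ?_⟩
    · intro hmem
      have := hsupp _ hmem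
      simp only [hv1] at this
      omega
    · intro v hv
      rw [SimpleGraph.Walk.support_cons, List.mem_cons] at hv
      rcases hv with rfl | hv
      · exact le_of_eq hv1
      · exact le_trans (hsupp v hv) (by omega)

/-- For every `k`-flip `G'` of the disjoint union of `ℓ` paths of length `r`, at least
`ℓ - r * k` targets are joined to some source by a path of length `r` in `G'`. -/
theorem stmt12 (k r ℓ : ℕ) (hk : 1 ≤ k) (hr : 1 ≤ r) (hℓ : 1 ≤ ℓ)
    (G' : SimpleGraph (Fin (r + 1) × Fin ℓ))
    (hflip : IsKFlip k (pathsGraph r ℓ) G') :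
    ℓ - r * k ≤ {j : Fin ℓ | ∃ j' : Fin ℓ,
      ∃ p : G'.Walk (Fin.last r, j) (0, j'), p.IsPath ∧ p.length = r}.ncard := by
  classical
  obtain ⟨c, F, hF, hadj⟩ := hflip
  have hcard : ∀ i : ℕ, i ≤ r → (doomedSet G' i).card ≤ i * k := by
    intro i
    induction i with
    | zero => intro _; simp [doomedSet]
    | succ i ih =>
      intro h
      have h1 := card_doomedSet_succ hadj (i := i) h
      have h2 := ih (by omega)
      have : (i + 1) * k = i * k + k := by ring
      omega
  have hDr := hcard r le_rfl
  have hlast : ((r : ℕ) : Fin (r + 1)) = Fin.last r := by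
    ext
    simp [Fin.val_cast_of_lt (Nat.lt_succ_self r)]
  have hsubT : (((doomedSet G' r)ᶜ : Finset (Fin ℓ)) : Set (Fin ℓ)) ⊆
      {j : Fin ℓ | ∃ j' : Fin ℓ,
        ∃ p : G'.Walk (Fin.last r, j) (0, j'), p.IsPath ∧ p.length = r} := by
    intro j hj
    simp only [Finset.coe_compl, Set.mem_compl_iff, Finset.mem_coe] at hj
    obtain ⟨j', p, hp, hlen, -⟩ := escape G' r le_rfl j hj
    refine ⟨j', p.copy (by rw [hlast]) rfl, ?_, ?_⟩
    · rwa [SimpleGraph.Walk.isPath_copy]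
    · rwa [SimpleGraph.Walk.length_copy]
  have hle := Set.ncard_le_ncard hsubT (Set.toFinite _)
  rw [Set.ncard_coe_finset] at hle
  have hc : ((doomedSet G' r)ᶜ : Finset (Fin ℓ)).card = ℓ - (doomedSet G' r).card := by
    rw [Finset.card_compl]
    simp
  omega
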